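/- Let f : X → Y be a continuous map between sober topological spaces. If every fiber of f is discrete (as a subspace), then the Krull dimension of X is at most the Krull dimension of Y. -/

import Mathlib

/-- Let `f : X → Y` be a continuous map between sober topological spaces. If every fiber
of `f` is discrete, then the Krull dimension of `X` is at most the Krull dimension of `Y`. -/
theorem stmt_0 {X Y : Type*} [TopologicalSpace X] [TopologicalSpace Y]
    [QuasiSober X] [T0Space X] [QuasiSober Y] [T0Space Y]
    (f : X → Y) (hf : Continuous f)
    (hfib : ∀ y : Y, DiscreteTopology (f ⁻¹' {y})) :
    topologicalKrullDim X ≤ topologicalKrullDim Y := by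
  apply Order.krullDim_le_of_strictMono
    (fun Z : TopologicalSpace.IrreducibleCloseds X =>
      (⟨closure (f '' Z), (Z.2.image f hf.continuousOn).closure, isClosed_closure⟩ :
        TopologicalSpace.IrreducibleCloseds Y))
  intro Z₁ Z₂ hlt
  have hmono : closure (f '' (Z₁ : Set X)) ⊆ closure (f '' (Z₂ : Set X)) :=
    closure_mono (Set.image_mono (f := f) (le_of_lt hlt))
  rw [show (Z₁ < Z₂) ↔ ((Z₁ : Set X) < (Z₂ : Set X)) from Iff.rfl] at hlt
  refine lt_of_le_of_ne hmono ?_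
  intro heq
  -- generic points of Z₁, Z₂
  obtain ⟨ξ₁, hξ₁⟩ := QuasiSober.sober Z₁.2 Z₁.3
  obtain ⟨ξ₂, hξ₂⟩ := QuasiSober.sober Z₂.2 Z₂.3
  -- closure of image of closure of singleton is closure of image of singleton
  have key : ∀ (ξ : X) (Z : Set X), IsGenericPoint ξ Z →
      closure (f '' Z) = closure ({f ξ} : Set Y) := by
    intro ξ Z hξ
    apply subset_antisymm
    · rw [← hξ]
      refine closure_minimal ?_ isClosed_closure
      calc f '' closure {ξ} ⊆ closure (f '' {ξ}) := image_closure_subset_closure_image hf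
        _ = closure {f ξ} := by rw [Set.image_singleton]
    · apply closure_minimal _ isClosed_closure
      rw [Set.singleton_subset_iff]
      exact subset_closure ⟨ξ, hξ.mem, rfl⟩
  have h1 := key ξ₁ _ hξ₁
  have h2 := key ξ₂ _ hξ₂
  have hins : f ξ₁ = f ξ₂ := by
    have : Inseparable (f ξ₁) (f ξ₂) := by
      have heq' : closure (f '' (Z₁ : Set X)) = closure (f '' (Z₂ : Set X)) :=
        congrArg TopologicalSpace.IrreducibleCloseds.carrier heq
      rw [inseparable_iff_closure_eq, ← h1, ← h2]
      exact heq'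
    exact this.eq
  -- ξ₁ and ξ₂ lie in the same fiber
  set y := f ξ₂ with hy
  have hm1 : ξ₁ ∈ f ⁻¹' {y} := by simp [hins]
  have hm2 : ξ₂ ∈ f ⁻¹' {y} := by simp [hy]
  -- {ξ₁} is open in the fiber
  have : IsOpen ({(⟨ξ₁, hm1⟩ : f ⁻¹' {y})} : Set (f ⁻¹' {y})) := isOpen_discrete _
  rw [isOpen_induced_iff] at this
  obtain ⟨U, hU, hUeq⟩ := this
  have hξ₁U : ξ₁ ∈ U := by
    have : (⟨ξ₁, hm1⟩ : f ⁻¹' {y}) ∈ Subtype.val ⁻¹' U := by rw [hUeq]; rfl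
    exact this
  -- ξ₁ ∈ Z₂ = closure {ξ₂}, so U meets {ξ₂}
  have hξ₁Z₂ : ξ₁ ∈ closure ({ξ₂} : Set X) := by
    rw [hξ₂]; exact le_of_lt hlt hξ₁.mem
  have : ξ₂ ∈ U := by
    rcases mem_closure_iff.mp hξ₁Z₂ U hU hξ₁U with ⟨z, hzU, hz⟩
    rwa [Set.mem_singleton_iff.mp hz] at hzU
  have : (⟨ξ₂, hm2⟩ : f ⁻¹' {y}) ∈ Subtype.val ⁻¹' U := this
  rw [hUeq, Set.mem_singleton_iff] at this
  have hξeq : ξ₂ = ξ₁ := congrArg Subtype.val this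
  have : (Z₁ : Set X) = (Z₂ : Set X) := hξ₁.symm.trans (hξeq ▸ hξ₂)
  exact absurd this (ne_of_lt hlt)
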